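/- Let σ² > 0, B > 0, g̃ > 0, p_c ≥ 0, ζ > 0, C > 0, and T > 0. Define β(x) = σ²·(2^{x/B} − 1). Then the per-user total energy-consumption function E(q, t, ℓ) = ζ·C³·q³/T² + (t/g̃)·β(ℓ/t) + p_c·t is convex (jointly in (q, t, ℓ)) on the convex set { (q, t, ℓ) ∈ ℝ³ : q ≥ 0, t > 0, ℓ ≥ 0 }. In particular, (t, ℓ) ↦ (t/g̃)·σ²·(2^{ℓ/(B·t)} − 1) is jointly convex on { t > 0, ℓ ≥ 0 }. -/

import Mathlib

lemma exp_lin_convexOn (c : ℝ) : ConvexOn ℝ Set.univ (fun x : ℝ => Real.exp (c * x)) := by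
  refine ⟨convex_univ, fun x _ y _ a b ha hb hab => ?_⟩
  have h := convexOn_exp.2 (Set.mem_univ (c * x)) (Set.mem_univ (c * y)) ha hb hab
  simp only [smul_eq_mul] at h ⊢
  have e : c * (a * x + b * y) = a * (c * x) + b * (c * y) := by ring
  rw [e]; exact h

lemma g0_convexOn (σ2 B g : ℝ) (hσ2 : 0 < σ2) (hB : 0 < B) (hg : 0 < g) :
    ConvexOn ℝ Set.univ (fun x : ℝ => σ2 / g * ((2 : ℝ) ^ (x / B) - 1)) := by
  have h2 : ∀ x : ℝ, (2 : ℝ) ^ (x / B) = Real.exp ((Real.log 2 / B) * x) := by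
    intro x
    rw [Real.rpow_def_of_pos (by norm_num : (0:ℝ) < 2)]
    ring_nf
  have hexp : ConvexOn ℝ Set.univ (fun x : ℝ => (2 : ℝ) ^ (x / B)) := by
    have h := exp_lin_convexOn (Real.log 2 / B)
    refine ⟨convex_univ, fun x hx y hy a b ha hb hab => ?_⟩
    simp only [smul_eq_mul, h2]
    exact h.2 (Set.mem_univ x) (Set.mem_univ y) ha hb hab
  have hsub : ConvexOn ℝ Set.univ (fun x : ℝ => (2 : ℝ) ^ (x / B) - 1) :=
    hexp.sub (concaveOn_const 1 convex_univ)
  have hc : (0:ℝ) ≤ σ2 / g := by positivity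
  have h := hsub.smul hc
  simpa [smul_eq_mul] using h
lemma perspective_convexOn {f : ℝ → ℝ} (hf : ConvexOn ℝ Set.univ f) :
    ConvexOn ℝ {p : ℝ × ℝ | 0 < p.1 ∧ 0 ≤ p.2} (fun p => p.1 * f (p.2 / p.1)) := by
  have hset : Convex ℝ {p : ℝ × ℝ | 0 < p.1 ∧ 0 ≤ p.2} := by
    have e : {p : ℝ × ℝ | 0 < p.1 ∧ 0 ≤ p.2} = Set.Ioi (0:ℝ) ×ˢ Set.Ici (0:ℝ) := by
      ext p; simp [Set.mem_prod]
    rw [e]; exact (convex_Ioi 0).prod (convex_Ici 0)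
  refine ⟨hset, fun p hp q hq a b ha hb hab => ?_⟩
  obtain ⟨hp1, -⟩ := hp
  obtain ⟨hq1, -⟩ := hq
  simp only [Prod.smul_fst, Prod.smul_snd, Prod.fst_add, Prod.snd_add, smul_eq_mul]
  set t : ℝ := a * p.1 + b * q.1 with ht
  have ht0 : 0 < t := by
    rcases eq_or_lt_of_le ha with h | h
    · have hb1 : b = 1 := by linarith
      simp [ht, ← h, hb1]; positivity
    · nlinarith [mul_nonneg hb hq1.le, mul_pos h hp1]
  have hw1 : (0:ℝ) ≤ a * p.1 / t := by positivity
  have hw2 : (0:ℝ) ≤ b * q.1 / t := by positivity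
  have hw : a * p.1 / t + b * q.1 / t = 1 := by field_simp; exact ht.symm
  have h := hf.2 (Set.mem_univ (p.2 / p.1)) (Set.mem_univ (q.2 / q.1)) hw1 hw2 hw
  simp only [smul_eq_mul] at h
  have e1 : a * p.1 / t * (p.2 / p.1) + b * q.1 / t * (q.2 / q.1)
      = (a * p.2 + b * q.2) / t := by
    field_simp
  rw [e1] at h
  have h2 := mul_le_mul_of_nonneg_left h ht0.le
  calc t * f ((a * p.2 + b * q.2) / t)
      ≤ t * (a * p.1 / t * f (p.2 / p.1) + b * q.1 / t * f (q.2 / q.1)) := h2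
    _ = a * (p.1 * f (p.2 / p.1)) + b * (q.1 * f (q.2 / q.1)) := by
        field_simp

/-- The per-user total energy-consumption function
`E(q, t, ℓ) = ζ·C³·q³/T² + (t/g̃)·β(ℓ/t) + p_c·t`, with `β(x) = σ²·(2^{x/B} − 1)`,
is jointly convex on `{(q, t, ℓ) : q ≥ 0, t > 0, ℓ ≥ 0}`; in particular
`(t, ℓ) ↦ (t/g̃)·σ²·(2^{ℓ/(B·t)} − 1)` is jointly convex on `{t > 0, ℓ ≥ 0}`. -/
theorem energy_consumption_convex
    (σ2 B g pc ζ C T : ℝ)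
    (hσ2 : 0 < σ2) (hB : 0 < B) (hg : 0 < g) (hpc : 0 ≤ pc)
    (hζ : 0 < ζ) (hC : 0 < C) (hT : 0 < T) :
    ConvexOn ℝ {p : ℝ × ℝ × ℝ | 0 ≤ p.1 ∧ 0 < p.2.1 ∧ 0 ≤ p.2.2}
      (fun p => ζ * C ^ 3 * p.1 ^ 3 / T ^ 2 +
        (p.2.1 / g) * (σ2 * ((2 : ℝ) ^ (p.2.2 / p.2.1 / B) - 1)) + pc * p.2.1) ∧
    ConvexOn ℝ {p : ℝ × ℝ | 0 < p.1 ∧ 0 ≤ p.2}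
      (fun p => (p.1 / g) * (σ2 * ((2 : ℝ) ^ (p.2 / (B * p.1)) - 1))) := by
  have hpersp := perspective_convexOn (g0_convexOn σ2 B g hσ2 hB hg)
  have key2 : ConvexOn ℝ {p : ℝ × ℝ | 0 < p.1 ∧ 0 ≤ p.2}
      (fun p => (p.1 / g) * (σ2 * ((2 : ℝ) ^ (p.2 / (B * p.1)) - 1))) := by
    have heq : (fun p : ℝ × ℝ => (p.1 / g) * (σ2 * ((2 : ℝ) ^ (p.2 / (B * p.1)) - 1)))
        = fun p : ℝ × ℝ => p.1 * (σ2 / g * ((2 : ℝ) ^ (p.2 / p.1 / B) - 1)) := by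
      funext p
      rw [show p.2 / (B * p.1) = p.2 / p.1 / B by rw [div_div, mul_comm]]
      ring
    rw [heq]; exact hpersp
  refine ⟨?_, key2⟩
  have hS3 : Convex ℝ {p : ℝ × ℝ × ℝ | 0 ≤ p.1 ∧ 0 < p.2.1 ∧ 0 ≤ p.2.2} := by
    have e : {p : ℝ × ℝ × ℝ | 0 ≤ p.1 ∧ 0 < p.2.1 ∧ 0 ≤ p.2.2}
        = Set.Ici (0:ℝ) ×ˢ (Set.Ioi (0:ℝ) ×ˢ Set.Ici (0:ℝ)) := by
      ext p; simp [Set.mem_prod]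
    rw [e]; exact (convex_Ici 0).prod ((convex_Ioi 0).prod (convex_Ici 0))
  have hA : ConvexOn ℝ {p : ℝ × ℝ × ℝ | 0 ≤ p.1 ∧ 0 < p.2.1 ∧ 0 ≤ p.2.2}
      (fun p => ζ * C ^ 3 * p.1 ^ 3 / T ^ 2) := by
    refine ⟨hS3, fun p hp q hq a b ha hb hab => ?_⟩
    have h := (convexOn_pow 3).2 hp.1 hq.1 ha hb hab
    simp only [smul_eq_mul, Prod.smul_fst, Prod.fst_add] at h ⊢
    have hc : (0:ℝ) ≤ ζ * C ^ 3 / T ^ 2 := by positivity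
    have h2 := mul_le_mul_of_nonneg_left h hc
    calc ζ * C ^ 3 * (a * p.1 + b * q.1) ^ 3 / T ^ 2
        = ζ * C ^ 3 / T ^ 2 * (a * p.1 + b * q.1) ^ 3 := by ring
      _ ≤ ζ * C ^ 3 / T ^ 2 * (a * p.1 ^ 3 + b * q.1 ^ 3) := h2
      _ = a * (ζ * C ^ 3 * p.1 ^ 3 / T ^ 2) + b * (ζ * C ^ 3 * q.1 ^ 3 / T ^ 2) := by ring
  have hB2 : ConvexOn ℝ {p : ℝ × ℝ × ℝ | 0 ≤ p.1 ∧ 0 < p.2.1 ∧ 0 ≤ p.2.2}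
      (fun p => (p.2.1 / g) * (σ2 * ((2 : ℝ) ^ (p.2.2 / p.2.1 / B) - 1))) := by
    refine ⟨hS3, fun p hp q hq a b ha hb hab => ?_⟩
    have h := hpersp.2 (Set.mem_setOf.mpr ⟨hp.2.1, hp.2.2⟩ : p.2 ∈ _)
      (Set.mem_setOf.mpr ⟨hq.2.1, hq.2.2⟩ : q.2 ∈ _) ha hb hab
    simp only [smul_eq_mul, Prod.smul_fst, Prod.smul_snd, Prod.fst_add, Prod.snd_add] at h ⊢
    have e : ∀ r : ℝ × ℝ, (r.1 / g) * (σ2 * ((2 : ℝ) ^ (r.2 / r.1 / B) - 1))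
        = r.1 * (σ2 / g * ((2 : ℝ) ^ (r.2 / r.1 / B) - 1)) := by intro r; ring
    calc (a * p.2.1 + b * q.2.1) / g *
          (σ2 * ((2:ℝ) ^ ((a * p.2.2 + b * q.2.2) / (a * p.2.1 + b * q.2.1) / B) - 1))
        = (a * p.2.1 + b * q.2.1) *
          (σ2 / g * ((2:ℝ) ^ ((a * p.2.2 + b * q.2.2) / (a * p.2.1 + b * q.2.1) / B) - 1)) := by
          ring
      _ ≤ a * (p.2.1 * (σ2 / g * ((2:ℝ) ^ (p.2.2 / p.2.1 / B) - 1)))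
          + b * (q.2.1 * (σ2 / g * ((2:ℝ) ^ (q.2.2 / q.2.1 / B) - 1))) := h
      _ = a * ((p.2.1 / g) * (σ2 * ((2:ℝ) ^ (p.2.2 / p.2.1 / B) - 1)))
          + b * ((q.2.1 / g) * (σ2 * ((2:ℝ) ^ (q.2.2 / q.2.1 / B) - 1))) := by
          rw [e p.2, e q.2]
  have hC3 : ConvexOn ℝ {p : ℝ × ℝ × ℝ | 0 ≤ p.1 ∧ 0 < p.2.1 ∧ 0 ≤ p.2.2}
      (fun p => pc * p.2.1) := by
    refine ⟨hS3, fun p _ q _ a b ha hb hab => ?_⟩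
    simp only [smul_eq_mul, Prod.smul_fst, Prod.smul_snd, Prod.fst_add, Prod.snd_add]
    exact le_of_eq (by ring)
  exact (hA.add hB2).add hC3
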